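/- Let k be a commutative ring which is a ℚ-algebra, A and B associative unital k-algebras, λ ∈ k, ∂_B a λ-weighted derivation on B, and f : B → A a k-algebra homomorphism. Then the map g : B → A^ℕ defined by g(b)_n = f(∂_B^n(b)) is the unique k-algebra homomorphism from B to (A^ℕ, ·^λ) satisfying g(b)_0 = f(b) and g(∂_B b)_n = g(b)_{n+1} for all b ∈ B and n ∈ ℕ. (This exhibits (A^ℕ, ·^λ) with the shift as the cofree λ-weighted differential algebra on A.) -/

import Mathlib

/-- The `lam`-weighted Hurwitz product on sequences:
`(a ·^lam b)_n = ∑_{r+s+t=n} (n!/(r!·s!·t!)) · lam^t · a_{r+t} · b_{s+t}`,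
the sum ranging over triples `(r,s,t)` with `r+s+t = n`, enumerated as
`r = x.1`, `s = y.1`, `t = y.2`. -/
noncomputable def hur {k A : Type*} [CommRing k] [Ring A] [Algebra k A]
    (lam : k) (a b : ℕ → A) : ℕ → A := fun n =>
  ∑ x ∈ Finset.HasAntidiagonal.antidiagonal n, ∑ y ∈ Finset.HasAntidiagonal.antidiagonal x.2,
    (n.factorial / (x.1.factorial * y.1.factorial * y.2.factorial)) •
      (lam ^ y.2 • (a (x.1 + y.2) * b (y.1 + y.2)))

/-- The sequence `J = (1,0,0,…)`, the unit for the weighted Hurwitz products. -/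
def Jseq (A : Type*) [One A] [Zero A] : ℕ → A := fun n => if n = 0 then 1 else 0

open Finset
section aux
variable {k B : Type*} [CommRing k] [Ring B] [Algebra k B] (lam : k) (Dl : Module.End k B)

lemma aux_coeff {r s t n : ℕ} (h : r + s + t = n) :
    n.factorial / (r.factorial * s.factorial * t.factorial)
      = n.choose (r + t) * (r + t).choose t := by
  have h1 : r + t ≤ n := by omega
  have e1 : n.choose (r+t) * (r+t).factorial * (n - (r+t)).factorial = n.factorial :=
    Nat.choose_mul_factorial_mul_factorial h1
  have e2 : (r+t).choose t * t.factorial * ((r+t) - t).factorial = (r+t).factorial :=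
    Nat.choose_mul_factorial_mul_factorial (by omega)
  have hs : n - (r+t) = s := by omega
  have hr : (r+t) - t = r := by omega
  rw [hs] at e1; rw [hr] at e2
  refine Nat.div_eq_of_eq_mul_left (by positivity) ?_
  calc n.factorial = n.choose (r+t) * (r+t).factorial * s.factorial := e1.symm
    _ = n.choose (r+t) * ((r+t).choose t * t.factorial * r.factorial) * s.factorial := by rw [e2]
    _ = n.choose (r+t) * (r+t).choose t * (r.factorial * s.factorial * t.factorial) := by ring

variable (hleib : ∀ x y : B, Dl (x*y) = Dl x * y + x * Dl y + lam • (Dl x * Dl y))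

noncomputable def El : Module.End k B := 1 + lam • Dl

lemma El_apply (b : B) : El lam Dl b = b + lam • Dl b := by simp [El]

include hleib in
lemma leib1 (x y : B) : Dl (x*y) = Dl x * El lam Dl y + x * Dl y := by
  rw [hleib, El_apply, mul_add, mul_smul_comm]; abel

lemma commute_D_E : Commute Dl (El lam Dl) :=
  (Commute.one_right Dl).add_right ((Commute.refl Dl).smul_right lam)

lemma D_El_pow (i : ℕ) (b : B) : Dl ((El lam Dl ^ i) b) = (El lam Dl ^ i) (Dl b) := by
  have := ((commute_D_E lam Dl).pow_right i).eq
  calc Dl ((El lam Dl ^ i) b) = (Dl * El lam Dl ^ i) b := rfl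
    _ = (El lam Dl ^ i * Dl) b := by rw [this]
    _ = _ := rfl

lemma pow_comm_apply (F : Module.End k B) (i : ℕ) (b : B) : F ((F ^ i) b) = (F ^ i) (F b) := by
  rw [← Module.End.mul_apply, ← pow_succ', pow_succ, Module.End.mul_apply]

lemma El_pow_apply (i : ℕ) (y : B) :
    (El lam Dl ^ i) y = ∑ t ∈ range (i+1), i.choose t • lam ^ t • (Dl ^ t) y := by
  have hc : Commute (lam • Dl) (1 : Module.End k B) := Commute.one_right _
  have h2 := hc.add_pow i
  rw [show El lam Dl = lam • Dl + 1 by rw [El]; abel, h2, LinearMap.sum_apply]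
  refine Finset.sum_congr rfl fun t ht => ?_
  rw [one_pow, mul_one, smul_pow]
  rw [Module.End.mul_apply, Module.End.natCast_apply, map_nsmul, LinearMap.smul_apply]

include hleib in
lemma leibn (n : ℕ) (x y : B) :
    (Dl ^ n) (x * y) = ∑ p ∈ antidiagonal n,
      n.choose p.1 • ((Dl ^ p.1) x * (El lam Dl ^ p.1) ((Dl ^ p.2) y)) := by
  induction n with
  | zero => simp
  | succ n ih =>
    have step : ∀ b c : B, ∀ i : ℕ,
        Dl ((Dl ^ i) b * (El lam Dl ^ i) c)
          = (Dl ^ (i+1)) b * (El lam Dl ^ (i+1)) c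
            + (Dl ^ i) b * (El lam Dl ^ i) (Dl c) := by
      intro b c i
      rw [leib1 lam Dl hleib, D_El_pow]
      congr 2
      · rw [pow_succ, Module.End.mul_apply, pow_comm_apply]
      · rw [pow_succ, Module.End.mul_apply, pow_comm_apply]
    rw [pow_succ', Module.End.mul_apply, ih, map_sum]
    have expand : ∀ p : ℕ × ℕ, p ∈ antidiagonal n →
        Dl (n.choose p.1 • ((Dl ^ p.1) x * (El lam Dl ^ p.1) ((Dl ^ p.2) y)))
          = n.choose p.1 • ((Dl ^ (p.1+1)) x * (El lam Dl ^ (p.1+1)) ((Dl ^ p.2) y))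
            + n.choose p.1 • ((Dl ^ p.1) x * (El lam Dl ^ p.1) ((Dl ^ (p.2+1)) y)) := by
      intro p _
      rw [map_nsmul, step, smul_add]
      congr 3
      rw [pow_succ, Module.End.mul_apply, pow_comm_apply]
    rw [Finset.sum_congr rfl expand, Finset.sum_add_distrib]
    set X : ℕ → B := fun i => (Dl ^ i) x with hX
    set Z : ℕ × ℕ → B := fun p => (El lam Dl ^ p.1) ((Dl ^ p.2) y) with hZ
    set Cb : ℕ → ℕ := fun i => if i = 0 then 0 else n.choose (i-1) with hCb
    have pascal : ∀ i : ℕ, (n+1).choose i = n.choose i + Cb i := by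
      intro i
      match i with
      | 0 => simp [hCb]
      | (i+1) =>
        rw [Nat.choose_succ_succ']
        simp only [hCb, if_neg (Nat.succ_ne_zero i), Nat.succ_sub_one]
        omega
    have tgt : ∑ p ∈ antidiagonal (n+1), (n+1).choose p.1 • (X p.1 * Z p)
        = (∑ p ∈ antidiagonal (n+1), n.choose p.1 • (X p.1 * Z p))
          + ∑ p ∈ antidiagonal (n+1), Cb p.1 • (X p.1 * Z p) := by
      rw [← Finset.sum_add_distrib]
      exact Finset.sum_congr rfl fun p _ => by rw [pascal, add_smul]
    rw [tgt, add_comm]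
    congr 1
    · rw [Finset.Nat.sum_antidiagonal_succ']
      simp only [Nat.choose_succ_self, zero_smul, zero_add]
      rfl
    · rw [Finset.Nat.sum_antidiagonal_succ]
      simp only [hCb, if_pos rfl, zero_smul, zero_add, Nat.succ_ne_zero, if_neg,
        Nat.succ_sub_one, if_false]
      rfl

include hleib in
lemma key_formula (n : ℕ) (x y : B) :
    (Dl ^ n) (x * y) = ∑ p ∈ antidiagonal n, ∑ q ∈ antidiagonal p.2,
      (n.factorial / (p.1.factorial * q.1.factorial * q.2.factorial)) •
        lam ^ q.2 • ((Dl ^ (p.1 + q.2)) x * (Dl ^ (q.1 + q.2)) y) := by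
  rw [leibn lam Dl hleib]
  have expand : ∀ p : ℕ × ℕ, p ∈ antidiagonal n →
      n.choose p.1 • ((Dl ^ p.1) x * (El lam Dl ^ p.1) ((Dl ^ p.2) y))
        = ∑ t ∈ range (p.1+1),
            (n.choose p.1 * p.1.choose t) • lam ^ t • ((Dl ^ p.1) x * (Dl ^ (t + p.2)) y) := by
    intro p _
    rw [El_pow_apply, Finset.mul_sum, Finset.smul_sum]
    refine Finset.sum_congr rfl fun t _ => ?_
    rw [mul_smul_comm, mul_smul_comm, mul_smul, pow_add, Module.End.mul_apply]
  rw [Finset.sum_congr rfl expand]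
  rw [Finset.sum_sigma' (antidiagonal n) (fun p => range (p.1+1))]
  rw [Finset.sum_sigma' (antidiagonal n) (fun p => antidiagonal p.2)]
  refine Finset.sum_nbij'
    (fun a => ⟨(a.1.1 - a.2, a.1.2 + a.2), (a.1.2, a.2)⟩)
    (fun a => ⟨(a.1.1 + a.2.2, a.2.1), a.2.2⟩) ?_ ?_ ?_ ?_ ?_
  · rintro ⟨⟨i, j⟩, t⟩ ha
    simp only [Finset.mem_sigma, Finset.HasAntidiagonal.mem_antidiagonal, Finset.mem_range] at ha
    simp only [Finset.mem_sigma, Finset.HasAntidiagonal.mem_antidiagonal, Finset.mem_range]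
    simp only [and_true]
    omega
  · rintro ⟨⟨r, u⟩, s, t⟩ ha
    simp only [Finset.mem_sigma, Finset.HasAntidiagonal.mem_antidiagonal, Finset.mem_range] at ha
    simp only [Finset.mem_sigma, Finset.HasAntidiagonal.mem_antidiagonal, Finset.mem_range]
    omega
  · rintro ⟨⟨i, j⟩, t⟩ ha
    simp only [Finset.mem_sigma, Finset.HasAntidiagonal.mem_antidiagonal, Finset.mem_range] at ha
    simp only [Sigma.mk.inj_iff, Prod.mk.injEq, heq_eq_eq, and_true]
    omega
  · rintro ⟨⟨r, u⟩, s, t⟩ ha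
    simp only [Finset.mem_sigma, Finset.HasAntidiagonal.mem_antidiagonal, Finset.mem_range] at ha
    simp only [Sigma.mk.inj_iff, Prod.mk.injEq, heq_eq_eq, and_true]
    omega
  · rintro ⟨⟨i, j⟩, t⟩ ha
    simp only [Finset.mem_sigma, Finset.HasAntidiagonal.mem_antidiagonal, Finset.mem_range] at ha
    obtain ⟨hij, ht⟩ := ha
    have hco : n.factorial / ((i - t).factorial * j.factorial * t.factorial)
        = n.choose (i - t + t) * (i - t + t).choose t := aux_coeff (by omega)
    simp only []
    rw [hco]
    have h1 : i - t + t = i := by omega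
    rw [h1]
    congr 1
    rw [add_comm j t]
end aux

/-- Let `∂_B` be a `λ`-weighted derivation on `B` and `f : B → A` a
`k`-algebra homomorphism.  Then `g(b)_n = f(∂_B^n(b))` is the unique `k`-algebra
homomorphism from `B` to `(A^ℕ, ·^λ)` satisfying `g(b)_0 = f(b)` and
`g(∂_B b)_n = g(b)_{n+1}`.  (This exhibits `(A^ℕ, ·^λ)` with the shift as the cofree
`λ`-weighted differential algebra on `A`.) -/
theorem stmt14 {k A B : Type*} [CommRing k] [Algebra ℚ k] [Ring A] [Algebra k A]
    [Ring B] [Algebra k B] (lam : k)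
    (D : B → B)
    (hDadd : ∀ x y : B, D (x + y) = D x + D y)
    (hDsmul : ∀ (c : k) (x : B), D (c • x) = c • D x)
    (hDone : D 1 = 0)
    (hDleib : ∀ x y : B, D (x * y) = D x * y + x * D y + lam • (D x * D y))
    (f : B → A)
    (hfadd : ∀ x y : B, f (x + y) = f x + f y)
    (hfsmul : ∀ (c : k) (x : B), f (c • x) = c • f x)
    (hfone : f 1 = 1)
    (hfmul : ∀ x y : B, f (x * y) = f x * f y)
    (g : B → ℕ → A) (hg : ∀ (b : B) (n : ℕ), g b n = f (D^[n] b)) :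
    (∀ x y : B, g (x + y) = g x + g y) ∧
    (∀ (c : k) (x : B), g (c • x) = c • g x) ∧
    (g 1 = Jseq A) ∧
    (∀ x y : B, g (x * y) = hur lam (g x) (g y)) ∧
    (∀ b : B, g b 0 = f b) ∧
    (∀ (b : B) (n : ℕ), g (D b) n = g b (n + 1)) ∧
    (∀ h : B → ℕ → A,
      (∀ x y : B, h (x + y) = h x + h y) →
      (∀ (c : k) (x : B), h (c • x) = c • h x) →
      (h 1 = Jseq A) →
      (∀ x y : B, h (x * y) = hur lam (h x) (h y)) →
      (∀ b : B, h b 0 = f b) →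
      (∀ (b : B) (n : ℕ), h (D b) n = h b (n + 1)) → h = g) := by
  set Dl : Module.End k B := { toFun := D, map_add' := hDadd, map_smul' := hDsmul } with hDldef
  have hDl : ∀ b : B, Dl b = D b := fun b => rfl
  have hpow : ∀ (n : ℕ) (b : B), (Dl ^ n) b = D^[n] b := fun n b => Module.End.pow_apply Dl n b
  set F : B →+ A := AddMonoidHom.mk' f hfadd with hFdef
  have hF : ∀ b : B, F b = f b := fun b => rfl
  have hgF : ∀ (b : B) (n : ℕ), g b n = F ((Dl ^ n) b) := by
    intro b n; rw [hg, hF, hpow]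
  have hleib' : ∀ x y : B, Dl (x * y) = Dl x * y + x * Dl y + lam • (Dl x * Dl y) := by
    intro x y; simp only [hDl]; exact hDleib x y
  refine ⟨?_, ?_, ?_, ?_, ?_, ?_, ?_⟩
  · intro x y
    funext n
    show g (x + y) n = g x n + g y n
    rw [hgF, hgF, hgF, map_add, map_add]
  · intro c x
    funext n
    show g (c • x) n = c • g x n
    rw [hgF, hgF, map_smul, hF, hF, hfsmul]
  · funext n
    rw [hgF]
    cases n with
    | zero => simpa [Jseq, hF] using hfone
    | succ n =>
      have h1 : (Dl ^ (n+1)) (1 : B) = 0 := by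
        rw [pow_succ, Module.End.mul_apply, hDl, hDone, map_zero]
      rw [h1, map_zero]
      simp [Jseq]
  · intro x y
    funext n
    rw [hgF, key_formula lam Dl hleib' n x y, map_sum]
    show _ = ∑ p ∈ Finset.HasAntidiagonal.antidiagonal n, ∑ q ∈ Finset.HasAntidiagonal.antidiagonal p.2,
      (n.factorial / (p.1.factorial * q.1.factorial * q.2.factorial)) •
        (lam ^ q.2 • (g x (p.1 + q.2) * g y (q.1 + q.2)))
    refine Finset.sum_congr rfl fun p _ => ?_
    rw [map_sum]
    refine Finset.sum_congr rfl fun q _ => ?_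
    rw [map_nsmul]
    congr 1
    rw [hF, hfsmul]
    congr 1
    rw [hfmul, hgF, hgF, hF, hF]
  · intro b
    rw [hg]
    rfl
  · intro b n
    rw [hg, hg, Function.iterate_succ_apply]
  · intro h _ _ _ _ h0 hsh
    funext b n
    induction n generalizing b with
    | zero => rw [h0, hg]; rfl
    | succ n ih =>
      rw [← hsh, ih, hg, hg, Function.iterate_succ_apply]
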